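/- Let f : [1,∞) → [1,∞) have regular growth exponent 0 with δ(r) := log f(r)/log r nonincreasing. Let Ψ(r) → ∞, Ξ(r) ↓ 0 and η(r) ↓ 0 as r → ∞, with η(r) ≥ r^{−1/2} and log log(1/Ξ(r)) + log(1/η(r)) ≤ C/δ(r) for some constant C > 0 and all large r. Then, setting s(r) = η(r)·r / log(1/Ξ(η(r)r)), one has (log(1/Ξ(η(r)r))) · f(s(r)) / f(r) → ∞ as r → ∞. -/
import Mathlib


/-- Regular growth exponent `χ` (ratio formulation). -/
def HasRegularGrowthExponent (f : ℝ → ℝ) (χ : ℝ) : Prop :=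
  ∀ ε : ℝ, 0 < ε → ∃ β r₀ c : ℝ, 1 ≤ β ∧ 1 ≤ r₀ ∧ 1 ≤ c ∧
    ∀ r α : ℝ, r₀ ≤ r → 1 ≤ α →
      (β ≤ α → α ^ (χ - ε) ≤ f (α * r) / f r ∧ f (α * r) / f r ≤ α ^ (χ + ε)) ∧
      (α < β → c⁻¹ ≤ f (α * r) / f r ∧ f (α * r) / f r ≤ c)

/-- Lemma 2.1: with `s(r) = η(r)·r / log(1/Ξ(η(r)·r))`, one has
`log(1/Ξ(η(r)r)) · f(s(r)) / f(r) → ∞` as `r → ∞`. -/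
theorem regzero_lemma (f Ψ Ξ η : ℝ → ℝ) (C : ℝ) (hC : 0 < C)
    (hf1 : ∀ r : ℝ, 1 ≤ r → 1 ≤ f r)
    (hreg : HasRegularGrowthExponent f 0)
    (hδmono : ∀ r s : ℝ, 1 < r → r ≤ s →
      Real.log (f s) / Real.log s ≤ Real.log (f r) / Real.log r)
    (hΨ : Filter.Tendsto Ψ Filter.atTop Filter.atTop)
    (hΞanti : Antitone Ξ)
    (hΞ0 : Filter.Tendsto Ξ Filter.atTop (nhds 0))
    (hΞpos : ∀ r : ℝ, 1 ≤ r → 0 < Ξ r)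
    (hΞlt1 : ∃ r₂ : ℝ, ∀ r : ℝ, r₂ ≤ r → Ξ r < 1)
    (hηanti : Antitone η)
    (hη0 : Filter.Tendsto η Filter.atTop (nhds 0))
    (hηlb : ∀ r : ℝ, 1 ≤ r → r ^ (-(1/2) : ℝ) ≤ η r)
    (hbound : ∃ r₃ : ℝ, ∀ r : ℝ, r₃ ≤ r →
      Real.log (Real.log (1 / Ξ r)) + Real.log (1 / η r)
        ≤ C / (Real.log (f r) / Real.log r))
    (hs : ∃ r₄ : ℝ, ∀ r : ℝ, r₄ ≤ r →
      1 ≤ η r * r / Real.log (1 / Ξ (η r * r)) ∧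
      η r * r / Real.log (1 / Ξ (η r * r)) ≤ r) :
    Filter.Tendsto
      (fun r : ℝ =>
        Real.log (1 / Ξ (η r * r)) *
          f (η r * r / Real.log (1 / Ξ (η r * r))) / f r)
      Filter.atTop Filter.atTop := by
  obtain ⟨r₂, hr₂⟩ := hΞlt1
  obtain ⟨r₃, hr₃⟩ := hbound
  obtain ⟨r₄, hr₄⟩ := hs
  -- g r = η r * r tends to atTop
  have hglb : ∀ r : ℝ, 1 ≤ r → r ^ ((1:ℝ)/2) ≤ η r * r := by
    intro r hr
    have rpos : (0:ℝ) < r := lt_of_lt_of_le one_pos hr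
    have h1 : r ^ (-(1/2) : ℝ) * r ≤ η r * r :=
      mul_le_mul_of_nonneg_right (hηlb r hr) rpos.le
    have h2 : r ^ (-(1/2) : ℝ) * r = r ^ ((1:ℝ)/2) := by
      rw [← Real.rpow_add_one rpos.ne']
      norm_num
    linarith [h1, h2.symm.le]
  have hgtop : Filter.Tendsto (fun r : ℝ => η r * r) Filter.atTop Filter.atTop := by
    apply Filter.tendsto_atTop_mono' _ _ (tendsto_rpow_atTop (by norm_num : (0:ℝ) < 1/2))
    filter_upwards [Filter.eventually_ge_atTop 1] with r hr using hglb r hr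
  have hgge1 : ∀ᶠ r : ℝ in Filter.atTop, 1 ≤ η r * r :=
    hgtop.eventually_ge_atTop 1
  -- L tends to atTop
  have hLtop : Filter.Tendsto (fun r : ℝ => Real.log (1 / Ξ (η r * r)))
      Filter.atTop Filter.atTop := by
    have h1 : Filter.Tendsto (fun r : ℝ => Ξ (η r * r)) Filter.atTop
        (nhdsWithin 0 (Set.Ioi 0)) := by
      apply tendsto_nhdsWithin_of_tendsto_nhds_of_eventually_within _ (hΞ0.comp hgtop)
      filter_upwards [hgge1] with r hr using hΞpos _ hr
    have h2 : Filter.Tendsto (fun r : ℝ => (Ξ (η r * r))⁻¹) Filter.atTop Filter.atTop :=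
      h1.inv_tendsto_nhdsGT_zero
    have h3 := Real.tendsto_log_atTop.comp h2
    simpa only [Function.comp_def, one_div] using h3
  -- reduce to an eventual lower bound
  apply Filter.tendsto_atTop_mono' Filter.atTop _
      (hLtop.const_mul_atTop (Real.exp_pos (-C)))
  -- eventual conditions
  have hη1 : ∀ᶠ r : ℝ in Filter.atTop, η r ≤ 1 := by
    filter_upwards [hη0.eventually (gt_mem_nhds (by norm_num : (0:ℝ) < 1))] with r hr
      using hr.le
  have hsq : ∀ᶠ r : ℝ in Filter.atTop, max 1 r₂ ≤ r ^ ((1:ℝ)/2) :=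
    (tendsto_rpow_atTop (by norm_num : (0:ℝ) < 1/2)).eventually_ge_atTop (max 1 r₂)
  filter_upwards [Filter.eventually_ge_atTop 2, Filter.eventually_ge_atTop r₃,
    Filter.eventually_ge_atTop r₄, hη1, hsq] with r hr2 hr3 hr4 hηr hsqr
  -- basic facts
  have hr1 : (1:ℝ) < r := by linarith
  have hr1le : (1:ℝ) ≤ r := hr1.le
  have rpos : (0:ℝ) < r := by linarith
  set u : ℝ := η r * r with hu
  have hgu : r ^ ((1:ℝ)/2) ≤ u := hglb r hr1le
  have hu1 : (1:ℝ) ≤ u := le_trans (le_trans (le_max_left 1 r₂) hsqr) hgu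
  have hur2 : r₂ ≤ u := le_trans (le_trans (le_max_right 1 r₂) hsqr) hgu
  have huler : u ≤ r := by
    calc u = η r * r := rfl
    _ ≤ 1 * r := mul_le_mul_of_nonneg_right hηr rpos.le
    _ = r := one_mul r
  have hΞupos : 0 < Ξ u := hΞpos u hu1
  have hΞult1 : Ξ u < 1 := hr₂ u hur2
  set L : ℝ := Real.log (1 / Ξ u) with hL
  have hLpos : 0 < L := by
    apply Real.log_pos
    rw [lt_div_iff₀ hΞupos]
    linarith
  obtain ⟨hs1, hsler⟩ := hr₄ r hr4
  set s : ℝ := u / L with hsdef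
  have hs1' : (1:ℝ) ≤ s := hs1
  have hsler' : s ≤ r := hsler
  have hspos : (0:ℝ) < s := lt_of_lt_of_le one_pos hs1'
  have hηpos : 0 < η r := lt_of_lt_of_le (Real.rpow_pos_of_pos rpos _) (hηlb r hr1le)
  -- δ
  set δ : ℝ := Real.log (f r) / Real.log r with hδ
  have hlogr : 0 < Real.log r := Real.log_pos hr1
  have hfrpos : 0 < f r := lt_of_lt_of_le one_pos (hf1 r hr1le)
  have hδ0 : 0 ≤ δ := div_nonneg (Real.log_nonneg (hf1 r hr1le)) hlogr.le
  have hfr_eq : f r = Real.exp (δ * Real.log r) := by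
    rw [hδ, div_mul_cancel₀ _ hlogr.ne', Real.exp_log hfrpos]
  have hfspos : 0 < f s := lt_of_lt_of_le one_pos (hf1 s hs1')
  -- f s ≥ exp (δ log s)
  have hfs : Real.exp (δ * Real.log s) ≤ f s := by
    rcases eq_or_lt_of_le hs1' with h | h
    · rw [← h]
      simpa using hf1 1 le_rfl
    · have hlogs : 0 < Real.log s := Real.log_pos h
      have hmono := hδmono s r h hsler'
      have h2 : δ * Real.log s ≤ Real.log (f s) := by
        have := (le_div_iff₀ hlogs).mp hmono
        linarith
      calc Real.exp (δ * Real.log s) ≤ Real.exp (Real.log (f s)) := Real.exp_le_exp.mpr h2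
      _ = f s := Real.exp_log hfspos
  -- log s = log (η r) + log r - log L
  have hlogs_eq : Real.log s = Real.log (η r) + Real.log r - Real.log L := by
    rw [hsdef, Real.log_div (by positivity) hLpos.ne', hu,
      Real.log_mul hηpos.ne' rpos.ne']
  -- the exponent bound : δ * (log L - log (η r)) ≤ C
  have hexp_bound : δ * (Real.log L - Real.log (η r)) ≤ C := by
    have hA := hr₃ r hr3
    have hlogη : Real.log (1 / η r) = - Real.log (η r) := by
      rw [one_div, Real.log_inv]
    have hΞrpos : 0 < Ξ r := hΞpos r hr1le
    have hLle : L ≤ Real.log (1 / Ξ r) := by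
      apply Real.log_le_log (by positivity)
      exact one_div_le_one_div_of_le hΞrpos (hΞanti huler)
    have hlogL : Real.log L ≤ Real.log (Real.log (1 / Ξ r)) :=
      Real.log_le_log hLpos hLle
    rcases eq_or_lt_of_le hδ0 with h0 | h0
    · rw [← h0, zero_mul]; exact hC.le
    · have h1 : (Real.log (Real.log (1 / Ξ r)) + Real.log (1 / η r)) * δ ≤ C :=
        (le_div_iff₀ h0).mp hA
      nlinarith [hlogL, hlogη]
  -- final chain
  have key1 : Real.exp (-C) * L ≤ L * Real.exp (δ * (Real.log s - Real.log r)) := by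
    have h1 : -C ≤ δ * (Real.log s - Real.log r) := by
      have : δ * (Real.log s - Real.log r) = -(δ * (Real.log L - Real.log (η r))) := by
        rw [hlogs_eq]; ring
      rw [this]
      linarith
    calc Real.exp (-C) * L = L * Real.exp (-C) := mul_comm _ _
    _ ≤ L * Real.exp (δ * (Real.log s - Real.log r)) :=
        mul_le_mul_of_nonneg_left (Real.exp_le_exp.mpr h1) hLpos.le
  have key2 : L * Real.exp (δ * (Real.log s - Real.log r)) ≤ L * f s / f r := by
    have h1 : Real.exp (δ * (Real.log s - Real.log r))
        = Real.exp (δ * Real.log s) / f r := by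
      rw [hfr_eq, mul_sub, Real.exp_sub]
    rw [h1, mul_div_assoc]
    apply mul_le_mul_of_nonneg_left _ hLpos.le
    gcongr
  calc Real.exp (-C) * L ≤ L * Real.exp (δ * (Real.log s - Real.log r)) := key1
  _ ≤ L * f s / f r := key2
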